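/- Let E be a set of real orthogonal n×n matrices. Then Cl(⟨E⟩) is a subgroup of O_n, and Cl(⟨E⟩) equals the set of all matrices X ∈ ℝ^{n×n} such that p(X) = 0 for every real polynomial p in the n² entry variables x_{1,1},…,x_{n,n} satisfying p(I) = 0 and p(eY) = p(Y) for all e ∈ E and all Y ∈ ℝ^{n×n} (where I is the identity matrix and eY is the matrix product). -/

import Mathlib

open Matrix

/-- Evaluation of a real polynomial in the `n²` entry variables at a matrix. -/
noncomputable def evalMat {m : Type*} [Fintype m]
    (p : MvPolynomial (m × m) ℝ) (M : Matrix m m ℝ) : ℝ :=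
  MvPolynomial.eval (fun q : m × m => M q.1 q.2) p

/-- A subset of `ℝ^{n×n}` is a subgroup of the orthogonal group `O_n` if it consists of
orthogonal matrices, contains the identity, and is closed under products and inverses
(for orthogonal matrices, the inverse is the transpose). -/
def IsOrthSubgroup {m : Type*} [Fintype m] [DecidableEq m]
    (A : Set (Matrix m m ℝ)) : Prop :=
  A ⊆ (Matrix.orthogonalGroup m ℝ : Set (Matrix m m ℝ)) ∧
    (1 : Matrix m m ℝ) ∈ A ∧
    (∀ X ∈ A, ∀ Y ∈ A, X * Y ∈ A) ∧
    (∀ X ∈ A, Xᵀ ∈ A)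

/-- The subgroup of the orthogonal group generated by a set `E` of orthogonal matrices,
viewed as a set of matrices. -/
def orthSubgroupClosure {m : Type*} [Fintype m] [DecidableEq m]
    (E : Set (Matrix m m ℝ)) : Set (Matrix m m ℝ) :=
  (fun u : Matrix.orthogonalGroup m ℝ => (u : Matrix m m ℝ)) ''
    (Subgroup.closure
      ((fun u : Matrix.orthogonalGroup m ℝ => (u : Matrix m m ℝ)) ⁻¹' E) :
      Set (Matrix.orthogonalGroup m ℝ))

open MvPolynomial MeasureTheory

section helpers
variable {m : Type*} [Fintype m] [DecidableEq m]

/-- Left-translation substitution on polynomials: `substL g p` evaluated at `Y`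
is `p` evaluated at `g * Y`. -/
noncomputable def substL (g : Matrix m m ℝ) :
    MvPolynomial (m × m) ℝ →ₐ[ℝ] MvPolynomial (m × m) ℝ :=
  MvPolynomial.aeval fun q : m × m => ∑ l, MvPolynomial.C (g q.1 l) * MvPolynomial.X (l, q.2)

omit [DecidableEq m] in
lemma evalMat_substL (g : Matrix m m ℝ) (p : MvPolynomial (m × m) ℝ) (Y : Matrix m m ℝ) :
    evalMat (substL g p) Y = evalMat p (g * Y) := by
  unfold evalMat
  induction p using MvPolynomial.induction_on with
  | C a => simp [substL]
  | add p q hp hq => simp only [map_add, hp, hq]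
  | mul_X p s hp =>
      obtain ⟨i, j⟩ := s
      rw [_root_.map_mul, MvPolynomial.eval_mul, MvPolynomial.eval_mul, hp]
      congr 1
      rw [show substL g (MvPolynomial.X (i, j))
            = ∑ l, MvPolynomial.C (g i l) * MvPolynomial.X (l, j) from
          MvPolynomial.aeval_X _ (i, j)]
      simp [Matrix.mul_apply]

lemma substL_support_bound (q : MvPolynomial (m × m) ℝ) :
    ∃ S : Finset ((m × m) →₀ ℕ), ∀ g : Matrix m m ℝ, (substL g q).support ⊆ S := by
  induction q using MvPolynomial.induction_on with
  | C a =>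
      refine ⟨(MvPolynomial.C (σ := m × m) a).support, fun g => ?_⟩
      simp [substL]
  | add p q hp hq =>
      obtain ⟨Sp, hSp⟩ := hp
      obtain ⟨Sq, hSq⟩ := hq
      refine ⟨Sp ∪ Sq, fun g => ?_⟩
      rw [map_add]
      exact MvPolynomial.support_add.trans (Finset.union_subset_union (hSp g) (hSq g))
  | mul_X p s hp =>
      obtain ⟨S, hS⟩ := hp
      refine ⟨S.biUnion fun d => Finset.univ.image fun l : m => d + Finsupp.single (l, s.2) 1,
        fun g => ?_⟩
      rw [_root_.map_mul, show substL g (MvPolynomial.X s)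
            = ∑ l, MvPolynomial.C (g s.1 l) * MvPolynomial.X (l, s.2) from
          MvPolynomial.aeval_X _ s, Finset.mul_sum]
      refine MvPolynomial.support_sum.trans ?_
      intro d hd
      rw [Finset.mem_biUnion] at hd
      obtain ⟨l, -, hl⟩ := hd
      have h1 : substL g p * (MvPolynomial.C (g s.1 l) * MvPolynomial.X (l, s.2))
          = MvPolynomial.C (g s.1 l) * (substL g p * MvPolynomial.X (l, s.2)) := by ring
      rw [h1, ← MvPolynomial.smul_eq_C_mul] at hl
      have h2 := MvPolynomial.support_smul (a := g s.1 l)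
        (f := substL g p * MvPolynomial.X (l, s.2)) hl
      rw [MvPolynomial.support_mul_X, Finset.mem_map] at h2
      obtain ⟨d', hd', rfl⟩ := h2
      rw [Finset.mem_biUnion]
      exact ⟨d', hS g hd', Finset.mem_image.2 ⟨l, Finset.mem_univ _, rfl⟩⟩

lemma continuous_coeff_substL (q : MvPolynomial (m × m) ℝ) (d : (m × m) →₀ ℕ) :
    Continuous fun g : Matrix m m ℝ => MvPolynomial.coeff d (substL g q) := by
  induction q using MvPolynomial.induction_on generalizing d with
  | C a =>
      simpa [substL] using
        continuous_const (y := MvPolynomial.coeff d (MvPolynomial.C (σ := m × m) a))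
  | add p q hp hq =>
      simp only [map_add, MvPolynomial.coeff_add]
      exact (hp d).add (hq d)
  | mul_X p s hp =>
      have key : (fun g : Matrix m m ℝ => MvPolynomial.coeff d (substL g (p * MvPolynomial.X s)))
          = fun g => ∑ l, g s.1 l *
              (if (l, s.2) ∈ d.support then
                MvPolynomial.coeff (d - Finsupp.single (l, s.2) 1) (substL g p) else 0) := by
        funext g
        rw [_root_.map_mul, show substL g (MvPolynomial.X s)
              = ∑ l, MvPolynomial.C (g s.1 l) * MvPolynomial.X (l, s.2) from
            MvPolynomial.aeval_X _ s, Finset.mul_sum, MvPolynomial.coeff_sum]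
        refine Finset.sum_congr rfl fun l _ => ?_
        rw [mul_left_comm, MvPolynomial.coeff_C_mul, MvPolynomial.coeff_mul_X']
      rw [key]
      refine continuous_finset_sum _ fun l _ => ?_
      refine (continuous_id.matrix_elem s.1 l).mul ?_
      split_ifs
      · exact hp _
      · exact continuous_const

omit [Fintype m] [DecidableEq m] in
lemma continuous_entry (q : m × m) :
    Continuous fun M : Matrix m m ℝ => M q.1 q.2 :=
  (continuous_apply q.2).comp (continuous_apply q.1)

omit [DecidableEq m] in
lemma continuous_evalMat (p : MvPolynomial (m × m) ℝ) :
    Continuous fun A : Matrix m m ℝ => evalMat p A :=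
  (MvPolynomial.continuous_eval p).comp
    (continuous_pi fun q => (continuous_apply q.2).comp (continuous_apply q.1))

/-- The group structure on a closed set of orthogonal matrices. -/
def kGroup (K : Set (Matrix m m ℝ))
    (horth : K ⊆ (Matrix.orthogonalGroup m ℝ : Set (Matrix m m ℝ)))
    (h1 : (1 : Matrix m m ℝ) ∈ K)
    (hmul : ∀ X ∈ K, ∀ Y ∈ K, X * Y ∈ K)
    (htr : ∀ X ∈ K, Xᵀ ∈ K) : Group ↥K where
  mul x y := ⟨x.1 * y.1, hmul _ x.2 _ y.2⟩
  one := ⟨1, h1⟩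
  inv x := ⟨x.1ᵀ, htr _ x.2⟩
  mul_assoc x y z := Subtype.ext (mul_assoc _ _ _)
  one_mul x := Subtype.ext (one_mul _)
  mul_one x := Subtype.ext (mul_one _)
  inv_mul_cancel x := Subtype.ext (by
    have h := horth x.2
    rw [SetLike.mem_coe, Matrix.mem_orthogonalGroup_iff'] at h
    show x.1ᵀ * x.1 = 1
    rw [← Matrix.conjTranspose_eq_transpose_of_trivial, ← Matrix.star_eq_conjTranspose]
    exact h)

/-- Multivariate Stone–Weierstrass approximation on a compact set of matrices. -/
lemma poly_approx (T : Set (Matrix m m ℝ)) (hT : IsCompact T) (f : C(Matrix m m ℝ, ℝ)) :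
    ∃ q : MvPolynomial (m × m) ℝ, ∀ t ∈ T, |evalMat q t - f t| < 1/4 := by
  haveI : CompactSpace ↥T := isCompact_iff_compactSpace.mp hT
  set Φ : MvPolynomial (m × m) ℝ →ₐ[ℝ] C(↥T, ℝ) :=
    MvPolynomial.aeval fun q : m × m =>
      ContinuousMap.mk (fun t : ↥T => (t : Matrix m m ℝ) q.1 q.2)
        (by exact (continuous_entry q).comp continuous_subtype_val)
    with hΦ
  have hPhi : ∀ (p : MvPolynomial (m × m) ℝ) (t : ↥T), Φ p t = evalMat p ↑t := by
    intro p t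
    induction p using MvPolynomial.induction_on with
    | C a => simp [hΦ, evalMat]
    | add p q hp hq => simp [map_add, hp, hq, evalMat]
    | mul_X p s hp => simp [_root_.map_mul, hp, evalMat]; ring_nf; simp [hΦ, evalMat]
  have hsep : (Φ.range).SeparatesPoints := by
    intro x y hxy
    have hne : (x : Matrix m m ℝ) ≠ (y : Matrix m m ℝ) := fun h => hxy (Subtype.ext h)
    obtain ⟨q0, hq0⟩ : ∃ q0 : m × m,
        (x : Matrix m m ℝ) q0.1 q0.2 ≠ (y : Matrix m m ℝ) q0.1 q0.2 := by
      by_contra h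
      push_neg at h
      exact hne (by ext i j; exact h (i, j))
    refine ⟨Φ (MvPolynomial.X q0), ⟨Φ (MvPolynomial.X q0), ⟨MvPolynomial.X q0, rfl⟩, rfl⟩, ?_⟩
    simpa [hPhi, evalMat] using hq0
  obtain ⟨g, hg⟩ := ContinuousMap.exists_mem_subalgebra_near_continuousMap_of_separatesPoints
    Φ.range hsep (f.restrict T) (1/4) (by norm_num)
  obtain ⟨q, hqq⟩ := g.2
  refine ⟨q, fun t ht => ?_⟩
  have hb := ContinuousMap.norm_coe_le_norm ((g : C(↥T, ℝ)) - f.restrict T) ⟨t, ht⟩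
  rw [ContinuousMap.sub_apply] at hb
  have h2 : (g : C(↥T, ℝ)) ⟨t, ht⟩ = evalMat q t := by
    rw [← hqq]; exact hPhi q ⟨t, ht⟩
  have h3 : (f.restrict T) ⟨t, ht⟩ = f t := rfl
  calc |evalMat q t - f t| = ‖(g : C(↥T, ℝ)) ⟨t, ht⟩ - (f.restrict T) ⟨t, ht⟩‖ := by
        rw [h2, h3]; rfl
    _ ≤ ‖(g : C(↥T, ℝ)) - f.restrict T‖ := hb
    _ < 1/4 := hg

/-- The key separation lemma: given a compact group `K` of orthogonal matrices and `X ∉ K`,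
there is a polynomial vanishing at `1`, invariant under left translation by elements of `K`,
and nonzero at `X`. -/
lemma exists_invariant_poly (K : Set (Matrix m m ℝ))
    (horth : K ⊆ (Matrix.orthogonalGroup m ℝ : Set (Matrix m m ℝ)))
    (h1 : (1 : Matrix m m ℝ) ∈ K)
    (hmul : ∀ X ∈ K, ∀ Y ∈ K, X * Y ∈ K)
    (htr : ∀ X ∈ K, Xᵀ ∈ K)
    (hKc : IsClosed K) (hcomp : IsCompact K)
    (X : Matrix m m ℝ) (hX : X ∉ K) :
    ∃ p : MvPolynomial (m × m) ℝ, evalMat p 1 = 0 ∧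
      (∀ e ∈ K, ∀ Y, evalMat p (e * Y) = evalMat p Y) ∧ evalMat p X ≠ 0 := by
  haveI : NormalSpace (Matrix m m ℝ) := inferInstanceAs (NormalSpace (m → m → ℝ))
  -- the translated copy of `K`
  have hKXcomp : IsCompact ((fun k => k * X) '' K) :=
    hcomp.image (continuous_id.matrix_mul continuous_const)
  have hdisj : Disjoint K ((fun k => k * X) '' K) := by
    rw [Set.disjoint_left]
    rintro a ha ⟨k, hk, rfl⟩
    apply hX
    have h' : kᵀ * (k * X) ∈ K := hmul _ (htr _ hk) _ ha
    have hkk : kᵀ * k = 1 := by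
      have h := horth hk
      rw [SetLike.mem_coe, Matrix.mem_orthogonalGroup_iff'] at h
      rw [← Matrix.conjTranspose_eq_transpose_of_trivial, ← Matrix.star_eq_conjTranspose]
      exact h
    rwa [← mul_assoc, hkk, one_mul] at h'
  obtain ⟨f, hf0, hf1, _⟩ :=
    exists_continuous_zero_one_of_isClosed hKc hKXcomp.isClosed hdisj
  obtain ⟨q, hq⟩ := poly_approx (K ∪ (fun k => k * X) '' K) (hcomp.union hKXcomp) f
  -- group and measure structure on `K`
  letI : Group ↥K := kGroup K horth h1 hmul htr
  haveI : CompactSpace ↥K := isCompact_iff_compactSpace.mp hcomp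
  haveI : IsTopologicalGroup ↥K := {
    continuous_mul := Continuous.subtype_mk
      (((continuous_subtype_val.comp continuous_fst).matrix_mul
        (continuous_subtype_val.comp continuous_snd))) _
    continuous_inv := Continuous.subtype_mk continuous_subtype_val.matrix_transpose _ }
  haveI : Nonempty ↥K := ⟨⟨1, h1⟩⟩
  letI : MeasurableSpace ↥K := borel _
  haveI : BorelSpace ↥K := ⟨rfl⟩
  set μ : Measure ↥K := MeasureTheory.Measure.haar
  set ν : Measure ↥K := μ.inv with hν
  haveI : IsFiniteMeasure μ := CompactSpace.isFiniteMeasure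
  haveI hfin : IsFiniteMeasure ν := by
    constructor
    rw [hν, MeasureTheory.Measure.inv_apply]
    simp only [Set.inv_univ]
    exact measure_lt_top μ _
  have hν0 : ν Set.univ ≠ 0 := by
    rw [hν, MeasureTheory.Measure.inv_apply]
    simp only [Set.inv_univ]
    exact isOpen_univ.measure_ne_zero μ Set.univ_nonempty
  haveI : ν.IsMulRightInvariant := by infer_instance
  have hinv : ∀ (F : ↥K → ℝ) (g : ↥K), ∫ k, F (k * g) ∂ν = ∫ k, F k ∂ν :=
    fun F g => MeasureTheory.integral_mul_right_eq_self F g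
  have hIntCont : ∀ F : ↥K → ℝ, Continuous F → Integrable F ν := fun F hF =>
    hF.integrable_of_hasCompactSupport (HasCompactSupport.of_compactSpace F)
  -- the averaged polynomial
  obtain ⟨S, hS⟩ := substL_support_bound q
  set pbar : MvPolynomial (m × m) ℝ :=
    ∑ d ∈ S, MvPolynomial.monomial d
      (∫ k : ↥K, MvPolynomial.coeff d (substL (↑k) q) ∂ν) with hpbardef
  have hpbar : ∀ Y, evalMat pbar Y = ∫ k : ↥K, evalMat q ((k : Matrix m m ℝ) * Y) ∂ν := by
    intro Y
    have hint : ∀ d : (m × m) →₀ ℕ,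
        Integrable (fun k : ↥K => MvPolynomial.coeff d (substL (↑k) q)) ν :=
      fun d => hIntCont _ ((continuous_coeff_substL q d).comp continuous_subtype_val)
    calc evalMat pbar Y
        = ∑ d ∈ S, (∫ k : ↥K, MvPolynomial.coeff d (substL (↑k) q) ∂ν) *
            (∏ i : m × m, Y i.1 i.2 ^ d i) := by
          rw [hpbardef]; unfold evalMat; rw [map_sum]
          refine Finset.sum_congr rfl fun d _ => ?_
          rw [MvPolynomial.eval_monomial, Finsupp.prod_pow]
      _ = ∑ d ∈ S, ∫ k : ↥K, MvPolynomial.coeff d (substL (↑k) q) *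
            (∏ i : m × m, Y i.1 i.2 ^ d i) ∂ν := by
          refine Finset.sum_congr rfl fun d _ => ?_
          rw [MeasureTheory.integral_mul_const]
      _ = ∫ k : ↥K, ∑ d ∈ S, MvPolynomial.coeff d (substL (↑k) q) *
            (∏ i : m × m, Y i.1 i.2 ^ d i) ∂ν := by
          rw [MeasureTheory.integral_finset_sum]
          exact fun d _ => (hint d).mul_const _
      _ = ∫ k : ↥K, evalMat q ((k : Matrix m m ℝ) * Y) ∂ν := by
          congr 1
          funext k
          rw [← evalMat_substL]
          unfold evalMat
          rw [MvPolynomial.eval_eq']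
          exact (Finset.sum_subset (hS ↑k) fun d _ hd => by
            rw [MvPolynomial.notMem_support_iff.mp hd, zero_mul]).symm
  -- invariance of `pbar`
  have hinvK : ∀ e ∈ K, ∀ Y, evalMat pbar (e * Y) = evalMat pbar Y := by
    intro e he Y
    rw [hpbar, hpbar]
    have heq : (fun k : ↥K => evalMat q ((k : Matrix m m ℝ) * (e * Y)))
        = fun k : ↥K => (fun k' : ↥K => evalMat q ((k' : Matrix m m ℝ) * Y)) (k * ⟨e, he⟩) := by
      funext k
      show evalMat q ((k : Matrix m m ℝ) * (e * Y))
          = evalMat q (((k * ⟨e, he⟩ : ↥K) : Matrix m m ℝ) * Y)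
      rw [show ((k * (⟨e, he⟩ : ↥K) : ↥K) : Matrix m m ℝ) = (k : Matrix m m ℝ) * e from rfl,
        mul_assoc]
    rw [heq]
    exact hinv (fun k' : ↥K => evalMat q ((k' : Matrix m m ℝ) * Y)) ⟨e, he⟩
  -- bounds
  set c : ℝ := (ν Set.univ).toReal with hc
  have hcpos : 0 < c := ENNReal.toReal_pos hν0 (measure_ne_top ν _)
  have hb1 : evalMat pbar 1 ≤ c * (1/4) := by
    rw [hpbar]
    have hle : ∀ k : ↥K, evalMat q ((k : Matrix m m ℝ) * 1) ≤ 1/4 := by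
      intro k
      rw [mul_one]
      have ht : (k : Matrix m m ℝ) ∈ K ∪ (fun k => k * X) '' K := Or.inl k.2
      have habs := hq _ ht
      have hfk : f (k : Matrix m m ℝ) = 0 := hf0 k.2
      rw [hfk] at habs
      have := abs_lt.mp habs
      linarith [this.2]
    calc ∫ k : ↥K, evalMat q ((k : Matrix m m ℝ) * 1) ∂ν
        ≤ ∫ _ : ↥K, (1/4 : ℝ) ∂ν := by
          refine MeasureTheory.integral_mono ?_ (integrable_const _) hle
          exact hIntCont _ ((continuous_evalMat q).comp
            (continuous_subtype_val.matrix_mul continuous_const))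
      _ = c * (1/4) := by rw [MeasureTheory.integral_const, smul_eq_mul, MeasureTheory.measureReal_def]
  have hb2 : c * (3/4) ≤ evalMat pbar X := by
    rw [hpbar]
    have hle : ∀ k : ↥K, (3/4 : ℝ) ≤ evalMat q ((k : Matrix m m ℝ) * X) := by
      intro k
      have ht : (k : Matrix m m ℝ) * X ∈ K ∪ (fun k => k * X) '' K :=
        Or.inr ⟨(k : Matrix m m ℝ), k.2, rfl⟩
      have habs := hq _ ht
      have hfk : f ((k : Matrix m m ℝ) * X) = 1 := hf1 ⟨(k : Matrix m m ℝ), k.2, rfl⟩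
      rw [hfk] at habs
      have := abs_lt.mp habs
      linarith [this.1]
    calc c * (3/4) = ∫ _ : ↥K, (3/4 : ℝ) ∂ν := by
          rw [MeasureTheory.integral_const, smul_eq_mul, MeasureTheory.measureReal_def]
      _ ≤ ∫ k : ↥K, evalMat q ((k : Matrix m m ℝ) * X) ∂ν := by
          refine MeasureTheory.integral_mono (integrable_const _) ?_ hle
          exact hIntCont _ ((continuous_evalMat q).comp
            (continuous_subtype_val.matrix_mul continuous_const))
  -- the final polynomial
  refine ⟨pbar - MvPolynomial.C (evalMat pbar 1), ?_, ?_, ?_⟩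
  all_goals {
    have hEval : ∀ Y, evalMat (pbar - MvPolynomial.C (evalMat pbar 1)) Y
        = evalMat pbar Y - evalMat pbar 1 := by
      intro Y; unfold evalMat; rw [map_sub, MvPolynomial.eval_C]
    first
      | (rw [hEval]; exact sub_self _)
      | (intro e he Y; rw [hEval, hEval, hinvK e he Y])
      | (rw [hEval]
         have : (0 : ℝ) < evalMat pbar X - evalMat pbar 1 := by linarith
         exact ne_of_gt this)
  }

end helpers

/-- For a set `E` of real orthogonal `n × n` matrices, the Euclidean closure
`Cl(⟨E⟩)` of the subgroup generated by `E` is a subgroup of `O_n`, and it equals the set of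
matrices `X` annihilated by every polynomial `p` in the `n²` entry variables satisfying
`p(I) = 0` and `p(eY) = p(Y)` for all `e ∈ E` and all matrices `Y`. -/
theorem closure_subgroup_eq_zero_set {n : ℕ}
    (E : Set (Matrix (Fin n) (Fin n) ℝ))
    (hE : E ⊆ (Matrix.orthogonalGroup (Fin n) ℝ : Set (Matrix (Fin n) (Fin n) ℝ))) :
    IsOrthSubgroup (closure (orthSubgroupClosure E)) ∧
    closure (orthSubgroupClosure E) =
      {X : Matrix (Fin n) (Fin n) ℝ | ∀ p : MvPolynomial (Fin n × Fin n) ℝ,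
        (evalMat p (1 : Matrix (Fin n) (Fin n) ℝ) = 0 ∧
          ∀ e ∈ E, ∀ Y : Matrix (Fin n) (Fin n) ℝ, evalMat p (e * Y) = evalMat p Y) →
        evalMat p X = 0} := by
  classical
  set G : Set (Matrix (Fin n) (Fin n) ℝ) := orthSubgroupClosure E with hGdef
  -- basic properties of `G`
  have hG1 : (1 : Matrix (Fin n) (Fin n) ℝ) ∈ G := ⟨1, Subgroup.one_mem _, rfl⟩
  have hGmul : ∀ X ∈ G, ∀ Y ∈ G, X * Y ∈ G := by
    rintro _ ⟨u, hu, rfl⟩ _ ⟨v, hv, rfl⟩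
    exact ⟨u * v, Subgroup.mul_mem _ hu hv, rfl⟩
  have hGtr : ∀ X ∈ G, Xᵀ ∈ G := by
    rintro _ ⟨u, hu, rfl⟩
    refine ⟨u⁻¹, Subgroup.inv_mem _ hu, ?_⟩
    have h1 : ((u⁻¹ : Matrix.orthogonalGroup (Fin n) ℝ) : Matrix (Fin n) (Fin n) ℝ)
        = star ((u : Matrix (Fin n) (Fin n) ℝ)) := by
      rw [← Unitary.star_eq_inv]
      rfl
    show ((u⁻¹ : Matrix.orthogonalGroup (Fin n) ℝ) : Matrix (Fin n) (Fin n) ℝ)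
        = ((u : Matrix (Fin n) (Fin n) ℝ))ᵀ
    rw [h1, Matrix.star_eq_conjTranspose, Matrix.conjTranspose_eq_transpose_of_trivial]
  have hGorth : G ⊆ (Matrix.orthogonalGroup (Fin n) ℝ : Set (Matrix (Fin n) (Fin n) ℝ)) := by
    rintro _ ⟨u, hu, rfl⟩
    exact u.2
  have hEG : E ⊆ G := by
    intro e he
    exact ⟨⟨e, hE he⟩, Subgroup.subset_closure he, rfl⟩
  -- the orthogonal group is closed
  have hOclosed : IsClosed (Matrix.orthogonalGroup (Fin n) ℝ : Set (Matrix (Fin n) (Fin n) ℝ)) := by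
    have heq : (Matrix.orthogonalGroup (Fin n) ℝ : Set (Matrix (Fin n) (Fin n) ℝ))
        = (fun A : Matrix (Fin n) (Fin n) ℝ => A * star A) ⁻¹' {1} := by
      ext A
      simp [Matrix.mem_orthogonalGroup_iff, Matrix.star_eq_conjTranspose, Matrix.conjTranspose_eq_transpose_of_trivial]
    rw [heq]
    exact IsClosed.preimage (continuous_id.matrix_mul continuous_star) isClosed_singleton
  -- closure properties
  have hK1 : (1 : Matrix (Fin n) (Fin n) ℝ) ∈ closure G := subset_closure hG1
  have hKmul : ∀ X ∈ closure G, ∀ Y ∈ closure G, X * Y ∈ closure G := by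
    have step1 : ∀ x ∈ G, ∀ y ∈ closure G, x * y ∈ closure G := by
      intro x hx y hy
      exact map_mem_closure (continuous_const.matrix_mul continuous_id) hy
        fun z hz => hGmul x hx z hz
    intro X hX Y hY
    have h := map_mem_closure (continuous_id.matrix_mul continuous_const) hX
      fun z hz => step1 z hz Y hY
    rwa [closure_closure] at h
  have hKtr : ∀ X ∈ closure G, Xᵀ ∈ closure G := fun X hX =>
    map_mem_closure continuous_id.matrix_transpose hX fun z hz => hGtr z hz
  have hKorth : closure G ⊆ (Matrix.orthogonalGroup (Fin n) ℝ : Set (Matrix (Fin n) (Fin n) ℝ)) :=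
    closure_minimal hGorth hOclosed
  have part1 : IsOrthSubgroup (closure G) := ⟨hKorth, hK1, hKmul, hKtr⟩
  -- compactness of the closure
  have hQcomp : IsCompact {A : Matrix (Fin n) (Fin n) ℝ | ∀ i j, A i j ∈ Set.Icc (-1:ℝ) 1} := by
    have heq : {A : Matrix (Fin n) (Fin n) ℝ | ∀ i j, A i j ∈ Set.Icc (-1:ℝ) 1}
        = Set.pi Set.univ fun _ : Fin n => Set.pi Set.univ fun _ : Fin n => Set.Icc (-1:ℝ) 1 := by
      ext A
      exact ⟨fun h i _ j _ => h i j, fun h i j => h i (Set.mem_univ i) j (Set.mem_univ j)⟩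
    rw [heq]
    exact isCompact_univ_pi fun _ => isCompact_univ_pi fun _ => isCompact_Icc
  have hOsub : (Matrix.orthogonalGroup (Fin n) ℝ : Set (Matrix (Fin n) (Fin n) ℝ))
      ⊆ {A : Matrix (Fin n) (Fin n) ℝ | ∀ i j, A i j ∈ Set.Icc (-1:ℝ) 1} := by
    intro A hA i j
    rw [SetLike.mem_coe, Matrix.mem_orthogonalGroup_iff] at hA
    have hdiag : ∑ l, A i l * A i l = 1 := by
      have h := congrArg (fun B : Matrix (Fin n) (Fin n) ℝ => B i i) hA
      simpa [Matrix.mul_apply, Matrix.one_apply, Matrix.star_apply] using h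
    have hle : A i j * A i j ≤ 1 := by
      rw [← hdiag]
      exact Finset.single_le_sum (f := fun l => A i l * A i l)
        (fun l _ => mul_self_nonneg _) (Finset.mem_univ j)
    constructor <;> nlinarith
  have hKcomp : IsCompact (closure G) :=
    hQcomp.of_isClosed_subset isClosed_closure
      (closure_minimal (hGorth.trans hOsub) hQcomp.isClosed)
  -- forward inclusion
  have hforward : closure G ⊆ {X : Matrix (Fin n) (Fin n) ℝ |
      ∀ p : MvPolynomial (Fin n × Fin n) ℝ,
        (evalMat p (1 : Matrix (Fin n) (Fin n) ℝ) = 0 ∧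
          ∀ e ∈ E, ∀ Y : Matrix (Fin n) (Fin n) ℝ, evalMat p (e * Y) = evalMat p Y) →
        evalMat p X = 0} := by
    intro X hX p hp
    obtain ⟨hp1, hpE⟩ := hp
    have hinvG : ∀ u : Matrix.orthogonalGroup (Fin n) ℝ,
        u ∈ Subgroup.closure
          ((fun u : Matrix.orthogonalGroup (Fin n) ℝ => (u : Matrix (Fin n) (Fin n) ℝ)) ⁻¹' E) →
        ∀ Y, evalMat p ((u : Matrix (Fin n) (Fin n) ℝ) * Y) = evalMat p Y := by
      intro u hu
      induction hu using Subgroup.closure_induction with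
      | mem x hx => exact fun Y => hpE _ hx Y
      | one =>
          intro Y
          rw [show ((1 : Matrix.orthogonalGroup (Fin n) ℝ) : Matrix (Fin n) (Fin n) ℝ) = 1
            from rfl, one_mul]
      | mul x y hx hy ihx ihy =>
          intro Y
          rw [show ((x * y : Matrix.orthogonalGroup (Fin n) ℝ) : Matrix (Fin n) (Fin n) ℝ)
              = (x : Matrix (Fin n) (Fin n) ℝ) * (y : Matrix (Fin n) (Fin n) ℝ) from rfl,
            mul_assoc, ihx, ihy]
      | inv x hx ih =>
          intro Y
          have hxx : (x : Matrix (Fin n) (Fin n) ℝ) * ((x⁻¹ : Matrix.orthogonalGroup (Fin n) ℝ)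
              : Matrix (Fin n) (Fin n) ℝ) = 1 := by
            have h := congrArg
              (fun v : Matrix.orthogonalGroup (Fin n) ℝ => (v : Matrix (Fin n) (Fin n) ℝ))
              (mul_inv_cancel x)
            simpa using h
          have h2 := ih (((x⁻¹ : Matrix.orthogonalGroup (Fin n) ℝ)
            : Matrix (Fin n) (Fin n) ℝ) * Y)
          rw [← mul_assoc, hxx, one_mul] at h2
          exact h2.symm
    have hzero : ∀ g ∈ G, evalMat p g = 0 := by
      rintro _ ⟨u, hu, rfl⟩
      have h := hinvG u hu 1
      rw [mul_one] at h
      exact h.trans hp1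
    have hclosed : IsClosed {Y : Matrix (Fin n) (Fin n) ℝ | evalMat p Y = 0} :=
      isClosed_eq (continuous_evalMat p) continuous_const
    exact closure_minimal (fun g hg => hzero g hg) hclosed hX
  -- backward inclusion
  have hback : {X : Matrix (Fin n) (Fin n) ℝ |
      ∀ p : MvPolynomial (Fin n × Fin n) ℝ,
        (evalMat p (1 : Matrix (Fin n) (Fin n) ℝ) = 0 ∧
          ∀ e ∈ E, ∀ Y : Matrix (Fin n) (Fin n) ℝ, evalMat p (e * Y) = evalMat p Y) →
        evalMat p X = 0} ⊆ closure G := by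
    intro X hXmem
    by_contra hX
    obtain ⟨p, hp1, hpinv, hpX⟩ := exists_invariant_poly (closure G) hKorth hK1 hKmul hKtr
      isClosed_closure hKcomp X hX
    exact hpX (hXmem p ⟨hp1, fun e he Y => hpinv e (subset_closure (hEG he)) Y⟩)
  exact ⟨part1, subset_antisymm hforward hback⟩
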